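/- Assume λ₋ = λ₊ = 1 and c·N + d ≠ 0. Define 𝒯_N on T_N ∪ ∂T_N by 𝒯_N(x,y) = (N−y)·x / (N²·(cN + d)) − 1_{x=y} / (2N·(cN + d)) for (x,y) ∈ T_N, and 𝒯_N ≡ 0 on ∂T_N. Then Δ²ᴰ_N 𝒯_N(x,y) = −1_{y = x+1} for every (x,y) ∈ T_N; that is, 𝒯_N is the expected occupation time of the upper diagonal 𝒟_N⁺ = {(x,x+1)} by the random walk with generator Δ²ᴰ_N. -/

import Mathlib

noncomputable section

/-- Left jump rate of the two-dimensional walk: `c_{z,z−1} = cλ₋` if `z = 1`, else `c`. -/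
def cMinus (c lm : ℝ) (z : ℤ) : ℝ := if z = 1 then c * lm else c

/-- Right jump rate of the two-dimensional walk: `c_{z,z+1} = cλ₊` if `z = N−1`, else `c`. -/
def cPlus (N : ℤ) (c lp : ℝ) (z : ℤ) : ℝ := if z = N - 1 then c * lp else c

/-- The generator `Δ²ᴰ_N` of the two-dimensional random walk on the triangle
`T_N = {(x,y) : 1 ≤ x ≤ y ≤ N−1}` (absorbed at `∂T_N`), acting on functions
`f : ℤ × ℤ → ℝ`: for `x < y` it is the nearest-neighbour operator with rates
`cMinus`/`cPlus` plus the extra diagonal term `d N² (f(x,x) + f(x+1,x+1) − 2f(x,x+1))`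
on the upper diagonal `y = x+1`; for `x = y` it is
`2N² (c_{x,x−1} f(x−1,x) + c_{x,x+1} f(x,x+1) − (c_{x,x−1}+c_{x,x+1}) f(x,x))`. -/
def lap2D (N : ℤ) (c d lm lp : ℝ) (f : ℤ → ℤ → ℝ) (x y : ℤ) : ℝ :=
  if x = y then
    2 * (N : ℝ) ^ 2 * (cMinus c lm x * f (x - 1) x + cPlus N c lp x * f x (x + 1)
      - (cMinus c lm x + cPlus N c lp x) * f x x)
  else
    (N : ℝ) ^ 2 * (cMinus c lm x * (f (x - 1) y - f x y)
        + cPlus N c lp x * (f (x + 1) y - f x y)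
        + cMinus c lm y * (f x (y - 1) - f x y)
        + cPlus N c lp y * (f x (y + 1) - f x y))
      + d * (N : ℝ) ^ 2 * (f x x + f (x + 1) (x + 1) - 2 * f x (x + 1))
        * (if y = x + 1 then 1 else 0)

set_option maxHeartbeats 1000000 in
/-- For `λ₋ = λ₊ = 1` and `cN + d ≠ 0`, the function
`𝒯_N(x,y) = (N−y)x/(N²(cN+d)) − 1_{x=y}/(2N(cN+d))` on `T_N`, vanishing on `∂T_N`,
satisfies `Δ²ᴰ_N 𝒯_N(x,y) = −1_{y=x+1}` on `T_N`: it is the expected occupation time of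
the upper diagonal `𝒟_N⁺` by the random walk with generator `Δ²ᴰ_N`. -/
theorem occupation_time_equation (N : ℤ) (hN : 5 ≤ N) (c d : ℝ) (hc : 0 < c)
    (hcd : c * (N : ℝ) + d ≠ 0) (T : ℤ → ℤ → ℝ)
    (hT : ∀ x y : ℤ, 1 ≤ x → x ≤ y → y ≤ N - 1 →
      T x y = ((N : ℝ) - y) * x / ((N : ℝ) ^ 2 * (c * N + d))
        - (if x = y then 1 / (2 * N * (c * N + d)) else 0))
    (hT0 : ∀ y : ℤ, 0 ≤ y → y ≤ N → T 0 y = 0)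
    (hTN : ∀ x : ℤ, 0 ≤ x → x ≤ N → T x N = 0) :
    ∀ x y : ℤ, 1 ≤ x → x ≤ y → y ≤ N - 1 →
      lap2D N c d 1 1 T x y = -(if y = x + 1 then 1 else 0) := by
  have hN0 : (N : ℝ) ≠ 0 := Int.cast_ne_zero.mpr (by omega)
  have hT' : ∀ x y : ℤ, 0 ≤ x → x ≤ y → y ≤ N →
      (x < y ∨ (1 ≤ x ∧ y ≤ N - 1)) →
      T x y = ((N : ℝ) - y) * x / ((N : ℝ) ^ 2 * (c * N + d))
        - (if x = y then 1 / (2 * N * (c * N + d)) else 0) := by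
    intro x y hx hxy hy h
    by_cases h1 : 1 ≤ x ∧ y ≤ N - 1
    · exact hT x y h1.1 hxy h1.2
    · have hxy' : x < y := by tauto
      rw [if_neg hxy'.ne]
      by_cases hx0 : x = 0
      · subst hx0
        rw [hT0 y (by omega) (by omega)]
        simp
      · have hyN : y = N := by omega
        subst hyN
        rw [hTN x (by omega) (by omega)]
        simp
  intro x y hx hxy hy
  simp only [lap2D, cMinus, cPlus, mul_one, ite_self]
  rcases eq_or_lt_of_le hxy with heq | hlt
  · subst heq
    rw [if_pos rfl]
    have e1 : T (x - 1) x = ((N : ℝ) - x) * (x - 1) / ((N : ℝ) ^ 2 * (c * N + d)) := by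
      rw [hT' (x - 1) x (by omega) (by omega) (by omega) (by omega),
        if_neg (by omega), sub_zero]; push_cast; ring
    have e2 : T x (x + 1) = ((N : ℝ) - (x + 1)) * x / ((N : ℝ) ^ 2 * (c * N + d)) := by
      rw [hT' x (x + 1) (by omega) (by omega) (by omega) (by omega),
        if_neg (by omega), sub_zero]; push_cast; ring
    have e3 : T x x = ((N : ℝ) - x) * x / ((N : ℝ) ^ 2 * (c * N + d))
        - 1 / (2 * N * (c * N + d)) := by
      rw [hT' x x (by omega) (by omega) (by omega) (by omega), if_pos rfl]
    rw [e1, e2, e3, if_neg (by omega)]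
    field_simp
    ring
  · rw [if_neg (by omega : ¬ x = y)]
    rcases eq_or_lt_of_le (show x + 1 ≤ y by omega) with heq | hlt2
    · -- y = x + 1
      have hy' : y = x + 1 := heq.symm
      subst hy'
      rw [if_pos rfl]
      have e1 : T (x - 1) (x + 1)
          = ((N : ℝ) - (x + 1)) * (x - 1) / ((N : ℝ) ^ 2 * (c * N + d)) := by
        rw [hT' (x - 1) (x + 1) (by omega) (by omega) (by omega) (by omega),
          if_neg (by omega), sub_zero]; push_cast; ring
      have e2 : T x (x + 1) = ((N : ℝ) - (x + 1)) * x / ((N : ℝ) ^ 2 * (c * N + d)) := by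
        rw [hT' x (x + 1) (by omega) (by omega) (by omega) (by omega),
          if_neg (by omega), sub_zero]; push_cast; ring
      have e3 : T (x + 1) (x + 1)
          = ((N : ℝ) - (x + 1)) * (x + 1) / ((N : ℝ) ^ 2 * (c * N + d))
            - 1 / (2 * N * (c * N + d)) := by
        rw [hT' (x + 1) (x + 1) (by omega) (by omega) (by omega) (by omega), if_pos rfl]
        push_cast; ring
      have e4 : T x (x + 1 - 1) = ((N : ℝ) - x) * x / ((N : ℝ) ^ 2 * (c * N + d))
          - 1 / (2 * N * (c * N + d)) := by
        rw [hT' x (x + 1 - 1) (by omega) (by omega) (by omega) (by omega),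
          if_pos (by omega)]; push_cast; ring
      have e5 : T x (x + 1 + 1)
          = ((N : ℝ) - (x + 2)) * x / ((N : ℝ) ^ 2 * (c * N + d)) := by
        rw [hT' x (x + 1 + 1) (by omega) (by omega) (by omega) (by omega),
          if_neg (by omega), sub_zero]; push_cast; ring
      have e6 : T x x = ((N : ℝ) - x) * x / ((N : ℝ) ^ 2 * (c * N + d))
          - 1 / (2 * N * (c * N + d)) := by
        rw [hT' x x (by omega) (by omega) (by omega) (by omega), if_pos rfl]
      rw [e1, e2, e3, e4, e5, e6]
      field_simp
      ring_nf
      field_simp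
      ring
    · -- y ≥ x + 2
      rw [if_neg (by omega : ¬ y = x + 1)]
      have e1 : T (x - 1) y = ((N : ℝ) - y) * (x - 1) / ((N : ℝ) ^ 2 * (c * N + d)) := by
        rw [hT' (x - 1) y (by omega) (by omega) (by omega) (by omega),
          if_neg (by omega), sub_zero]; push_cast; ring
      have e2 : T x y = ((N : ℝ) - y) * x / ((N : ℝ) ^ 2 * (c * N + d)) := by
        rw [hT' x y (by omega) (by omega) (by omega) (by omega),
          if_neg (by omega), sub_zero]
      have e3 : T (x + 1) y = ((N : ℝ) - y) * (x + 1) / ((N : ℝ) ^ 2 * (c * N + d)) := by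
        rw [hT' (x + 1) y (by omega) (by omega) (by omega) (by omega),
          if_neg (by omega), sub_zero]; push_cast; ring
      have e4 : T x (y - 1) = ((N : ℝ) - (y - 1)) * x / ((N : ℝ) ^ 2 * (c * N + d)) := by
        rw [hT' x (y - 1) (by omega) (by omega) (by omega) (by omega),
          if_neg (by omega), sub_zero]; push_cast; ring
      have e5 : T x (y + 1) = ((N : ℝ) - (y + 1)) * x / ((N : ℝ) ^ 2 * (c * N + d)) := by
        rw [hT' x (y + 1) (by omega) (by omega) (by omega) (by omega),
          if_neg (by omega), sub_zero]; push_cast; ring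
      rw [e1, e2, e3, e4, e5]
      field_simp
      ring

end
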